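/- Let V ∈ L²(ℝ^d), (ρ_n) a sequence of positive reals with ρ_n → 0, (x_n) ⊂ ℝ^d, and (u_n) ⊂ L²(ℝ^d) such that the rescaled functions v_n(x) = ρ_n^{d/2} u_n(ρ_n x + x_n) converge weakly to V in L²(ℝ^d). Then for every A > 0, liminf_{n→∞} sup_{y∈ℝ^d} ∫_{|x−y|≤1} |u_n(x)|² dx ≥ ∫_{|x|≤A} |V(x)|² dx, and hence liminf_{n→∞} sup_{y∈ℝ^d} ∫_{|x−y|≤1} |u_n|² ≥ ‖V‖_{L²}². -/

import Mathlib

open MeasureTheory Filter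

open scoped ENNReal NNReal

lemma lintegral_comp_smul_add (d : ℕ) (g : EuclideanSpace ℝ (Fin d) → ℝ≥0∞)
    (hg : Measurable g) {r : ℝ} (hr : 0 < r) (c : EuclideanSpace ℝ (Fin d)) :
    ∫⁻ x, g (r • x + c) ∂volume
      = ENNReal.ofReal ((r ^ d)⁻¹) * ∫⁻ y, g y ∂volume := by
  have hmeas : Measurable fun y : EuclideanSpace ℝ (Fin d) => g (y + c) :=
    hg.comp (measurable_add_const c)
  calc ∫⁻ x, g (r • x + c) ∂volume
      = ∫⁻ y, g (y + c) ∂(Measure.map (r • ·) volume) := by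
        rw [lintegral_map hmeas (measurable_const_smul r)]
    _ = ENNReal.ofReal |(r ^ Module.finrank ℝ (EuclideanSpace ℝ (Fin d)))⁻¹|
          * ∫⁻ y, g (y + c) ∂volume := by
        rw [Measure.map_addHaar_smul volume hr.ne', lintegral_smul_measure, smul_eq_mul]
    _ = ENNReal.ofReal ((r ^ d)⁻¹) * ∫⁻ y, g y ∂volume := by
        rw [lintegral_add_right_eq_self g c]
        congr 2
        rw [finrank_euclideanSpace_fin, abs_of_nonneg (by positivity)]

lemma setLIntegral_comp_smul_add (d : ℕ) (g : EuclideanSpace ℝ (Fin d) → ℝ≥0∞)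
    (hg : Measurable g) {r : ℝ} (hr : 0 < r) (c : EuclideanSpace ℝ (Fin d)) (A : ℝ) :
    ∫⁻ x in Metric.closedBall 0 A, g (r • x + c) ∂volume
      = ENNReal.ofReal ((r ^ d)⁻¹)
          * ∫⁻ y in Metric.closedBall c (r * A), g y ∂volume := by
  have key : ∀ x : EuclideanSpace ℝ (Fin d),
      (Metric.closedBall c (r * A)).indicator g (r • x + c)
        = (Metric.closedBall 0 A).indicator (fun x => g (r • x + c)) x := by
    intro x
    have hmem : r • x + c ∈ Metric.closedBall c (r * A) ↔ x ∈ Metric.closedBall 0 A := by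
      simp only [Metric.mem_closedBall, dist_eq_norm, add_sub_cancel_right, sub_zero,
        norm_smul, Real.norm_eq_abs, abs_of_pos hr]
      exact mul_le_mul_iff_right₀ hr
    by_cases hx : x ∈ Metric.closedBall 0 A
    · rw [Set.indicator_of_mem (hmem.mpr hx), Set.indicator_of_mem hx]
    · rw [Set.indicator_of_notMem (fun h => hx (hmem.mp h)), Set.indicator_of_notMem hx]
  have h := lintegral_comp_smul_add d ((Metric.closedBall c (r * A)).indicator g)
    (hg.indicator measurableSet_closedBall) hr c
  rw [lintegral_indicator measurableSet_closedBall] at h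
  rw [← h, ← lintegral_indicator (measurableSet_closedBall)]
  exact lintegral_congr fun x => (key x).symm

lemma affine_qmp (d : ℕ) {r : ℝ} (hr : 0 < r) (c : EuclideanSpace ℝ (Fin d)) :
    Measure.QuasiMeasurePreserving (fun x : EuclideanSpace ℝ (Fin d) => r • x + c)
      volume volume := by
  have hsm : Measure.QuasiMeasurePreserving (fun x : EuclideanSpace ℝ (Fin d) => r • x)
      volume volume := Measure.quasiMeasurePreserving_smul volume hr.ne'
  have := ((measurePreserving_add_right volume c).quasiMeasurePreserving).comp hsm
  exact this

lemma In_eq (d : ℕ) (u : EuclideanSpace ℝ (Fin d) → ℂ) (hu : MemLp u 2 volume)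
    {r : ℝ} (hr : 0 < r) (c : EuclideanSpace ℝ (Fin d)) (A : ℝ) :
    ∫⁻ x in Metric.closedBall 0 A,
        (‖((r ^ ((d:ℝ)/2) : ℝ) : ℂ) * u (r • x + c)‖₊ : ℝ≥0∞) ^ 2 ∂volume
      = ∫⁻ y in Metric.closedBall c (r * A), (‖u y‖₊ : ℝ≥0∞) ^ 2 ∂volume := by
  set w := hu.aestronglyMeasurable.mk u with hwdef
  have hw : Measurable w := hu.aestronglyMeasurable.stronglyMeasurable_mk.measurable
  have huw : u =ᵐ[volume] w := hu.aestronglyMeasurable.ae_eq_mk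
  have hcomp := (affine_qmp d hr c).ae_eq huw
  have hconst : ((‖((r ^ ((d:ℝ)/2) : ℝ) : ℂ)‖₊ : ℝ≥0∞)) ^ 2 = ENNReal.ofReal (r ^ d) := by
    rw [Complex.nnnorm_real, ← enorm_eq_nnnorm, Real.enorm_eq_ofReal (by positivity),
      ← ENNReal.ofReal_pow (by positivity)]
    congr 1
    rw [← Real.rpow_natCast (r ^ ((d:ℝ)/2)) 2, ← Real.rpow_mul hr.le,
      ← Real.rpow_natCast r d]
    norm_num
  calc ∫⁻ x in Metric.closedBall 0 A,
        (‖((r ^ ((d:ℝ)/2) : ℝ) : ℂ) * u (r • x + c)‖₊ : ℝ≥0∞) ^ 2 ∂volume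
      = ∫⁻ x in Metric.closedBall 0 A,
          ENNReal.ofReal (r ^ d) * (‖w (r • x + c)‖₊ : ℝ≥0∞) ^ 2 ∂volume := by
        apply lintegral_congr_ae
        filter_upwards [ae_restrict_of_ae hcomp] with x hx
        rw [nnnorm_mul, ENNReal.coe_mul, mul_pow, hconst]
        have hx' : u (r • x + c) = w (r • x + c) := hx
        rw [hx']
    _ = ENNReal.ofReal (r ^ d) * ∫⁻ x in Metric.closedBall 0 A,
          (‖w (r • x + c)‖₊ : ℝ≥0∞) ^ 2 ∂volume :=
        lintegral_const_mul' _ _ ENNReal.ofReal_ne_top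
    _ = ENNReal.ofReal (r ^ d) * (ENNReal.ofReal ((r ^ d)⁻¹)
          * ∫⁻ y in Metric.closedBall c (r * A), (‖w y‖₊ : ℝ≥0∞) ^ 2 ∂volume) := by
        rw [setLIntegral_comp_smul_add d (fun y => (‖w y‖₊ : ℝ≥0∞) ^ 2) (hw.enorm.pow_const 2) hr c A]
    _ = ∫⁻ y in Metric.closedBall c (r * A), (‖w y‖₊ : ℝ≥0∞) ^ 2 ∂volume := by
        rw [← mul_assoc, ← ENNReal.ofReal_mul (by positivity),
          mul_inv_cancel₀ (by positivity), ENNReal.ofReal_one, one_mul]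
    _ = ∫⁻ y in Metric.closedBall c (r * A), (‖u y‖₊ : ℝ≥0∞) ^ 2 ∂volume := by
        apply lintegral_congr_ae
        filter_upwards [ae_restrict_of_ae huw] with y hy
        rw [hy]

/-- if `v_n(x) = ρ_n^{d/2} u_n(ρ_n x + x_n)` converges weakly to `V` in `L²(ℝ^d)`
with `ρ_n → 0`, then for every `A > 0`,
`liminf_n sup_y ∫_{|x-y|≤1} |u_n|² ≥ ∫_{|x|≤A} |V|²`, and hence
`liminf_n sup_y ∫_{|x-y|≤1} |u_n|² ≥ ‖V‖_{L²}²`. -/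
theorem concentration_lower_bound (d : ℕ)
    (u : ℕ → EuclideanSpace ℝ (Fin d) → ℂ) (V : EuclideanSpace ℝ (Fin d) → ℂ)
    (ρ : ℕ → ℝ) (xc : ℕ → EuclideanSpace ℝ (Fin d))
    (hρpos : ∀ n, 0 < ρ n) (hρ : Tendsto ρ atTop (nhds 0))
    (hV : MemLp V 2 volume) (hu : ∀ n, MemLp (u n) 2 volume)
    (hweak : ∀ φ : EuclideanSpace ℝ (Fin d) → ℂ, MemLp φ 2 volume →
      Tendsto (fun n => ∫ x, ((ρ n ^ ((d:ℝ) / 2) : ℝ) : ℂ) * u n (ρ n • x + xc n) *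
          (starRingEnd ℂ) (φ x)) atTop
        (nhds (∫ x, V x * (starRingEnd ℂ) (φ x)))) :
    (∀ A : ℝ, 0 < A →
      (∫⁻ x in Metric.closedBall (0 : EuclideanSpace ℝ (Fin d)) A, (‖V x‖₊ : ℝ≥0∞) ^ 2) ≤
        Filter.liminf (fun n => ⨆ y : EuclideanSpace ℝ (Fin d),
          ∫⁻ x in Metric.closedBall y 1, (‖u n x‖₊ : ℝ≥0∞) ^ 2) Filter.atTop) ∧
    (∫⁻ x, (‖V x‖₊ : ℝ≥0∞) ^ 2) ≤
      Filter.liminf (fun n => ⨆ y : EuclideanSpace ℝ (Fin d),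
        ∫⁻ x in Metric.closedBall y 1, (‖u n x‖₊ : ℝ≥0∞) ^ 2) Filter.atTop := by
  have main : ∀ A : ℝ, 0 < A →
      (∫⁻ x in Metric.closedBall (0 : EuclideanSpace ℝ (Fin d)) A, (‖V x‖₊ : ℝ≥0∞) ^ 2) ≤
        Filter.liminf (fun n => ⨆ y : EuclideanSpace ℝ (Fin d),
          ∫⁻ x in Metric.closedBall y 1, (‖u n x‖₊ : ℝ≥0∞) ^ 2) Filter.atTop := by
    intro A hA
    set S : ℕ → ℝ≥0∞ := fun n => ⨆ y : EuclideanSpace ℝ (Fin d),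
      ∫⁻ x in Metric.closedBall y 1, (‖u n x‖₊ : ℝ≥0∞) ^ 2 with hSdef
    set B := Metric.closedBall (0 : EuclideanSpace ℝ (Fin d)) A with hBdef
    have hB : MeasurableSet B := measurableSet_closedBall
    set I : ℕ → ℝ≥0∞ := fun n => ∫⁻ x in B,
      (‖((ρ n ^ ((d:ℝ)/2) : ℝ) : ℂ) * u n (ρ n • x + xc n)‖₊ : ℝ≥0∞) ^ 2 with hIdef
    set J : ℝ≥0∞ := ∫⁻ x in B, (‖V x‖₊ : ℝ≥0∞) ^ 2 with hJdef
    -- J is finite and equals ofReal of the real integral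
    have hVB : Integrable (fun x => ‖V x‖ ^ 2) (volume.restrict B) := by
      have := (hV.restrict B).integrable_norm_rpow two_ne_zero ENNReal.ofNat_ne_top
      simpa [ENNReal.toReal_ofNat, Real.rpow_natCast] using this
    have hJr : J = ENNReal.ofReal (∫ x in B, ‖V x‖ ^ 2) := by
      rw [ofReal_integral_eq_lintegral_ofReal hVB
        (Filter.Eventually.of_forall fun x => sq_nonneg _)]
      refine lintegral_congr fun x => ?_
      rw [ENNReal.ofReal_pow (norm_nonneg _), ofReal_norm, enorm_eq_nnnorm]
    have hJtop : J ≠ ⊤ := by rw [hJr]; exact ENNReal.ofReal_ne_top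
    have hJrnn : (0:ℝ) ≤ ∫ x in B, ‖V x‖ ^ 2 :=
      integral_nonneg fun x => sq_nonneg _
    set φ : EuclideanSpace ℝ (Fin d) → ℂ := B.indicator V with hφdef
    have hφ : MemLp φ 2 volume := hV.indicator hB
    have hlim0 := hweak φ hφ
    have hpair : (∫ x, V x * (starRingEnd ℂ) (φ x)) = ((∫ x in B, ‖V x‖ ^ 2 : ℝ) : ℂ) := by
      have h1 : (fun x => V x * (starRingEnd ℂ) (φ x))
          = B.indicator (fun x => ((‖V x‖ ^ 2 : ℝ) : ℂ)) := by
        funext x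
        by_cases hx : x ∈ B
        · simp only [hφdef, Set.indicator_of_mem hx, Complex.mul_conj,
            Complex.normSq_eq_norm_sq]
        · simp [hφdef, Set.indicator_of_notMem hx]
      rw [h1, integral_indicator hB]
      exact integral_ofReal
    rw [hpair] at hlim0
    -- convergence of the squared norms of the pairings
    have hnorm : Tendsto (fun n => ‖∫ x, ((ρ n ^ ((d:ℝ)/2) : ℝ) : ℂ) * u n (ρ n • x + xc n) *
        (starRingEnd ℂ) (φ x)‖) atTop (nhds (∫ x in B, ‖V x‖ ^ 2)) := by
      have h := hlim0.norm
      rwa [Complex.norm_real, Real.norm_eq_abs, abs_of_nonneg hJrnn] at h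
    have hsq : Tendsto (fun n => ((‖∫ x, ((ρ n ^ ((d:ℝ)/2) : ℝ) : ℂ) * u n (ρ n • x + xc n) *
        (starRingEnd ℂ) (φ x)‖₊ : ℝ≥0∞)) ^ 2) atTop (nhds (J ^ 2)) := by
      have h2 := (ENNReal.continuous_ofReal.tendsto _).comp (hnorm.pow 2)
      have h3 : ∀ n, ENNReal.ofReal (‖∫ x, ((ρ n ^ ((d:ℝ)/2) : ℝ) : ℂ) * u n (ρ n • x + xc n) *
          (starRingEnd ℂ) (φ x)‖ ^ 2)
          = ((‖∫ x, ((ρ n ^ ((d:ℝ)/2) : ℝ) : ℂ) * u n (ρ n • x + xc n) *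
          (starRingEnd ℂ) (φ x)‖₊ : ℝ≥0∞)) ^ 2 := fun n => by
        rw [ENNReal.ofReal_pow (norm_nonneg _), ofReal_norm, enorm_eq_nnnorm]
      have h4 : ENNReal.ofReal ((∫ x in B, ‖V x‖ ^ 2) ^ 2) = J ^ 2 := by
        rw [ENNReal.ofReal_pow hJrnn, hJr]
      rw [← h4]
      simp only [Function.comp_def, h3] at h2
      exact h2
    -- Cauchy-Schwarz bound
    have hhalf : ∀ a : ℝ≥0∞, (a ^ ((1:ℝ)/2)) ^ (2:ℕ) = a := fun a => by
      rw [← ENNReal.rpow_natCast (a ^ ((1:ℝ)/2)) 2, ← ENNReal.rpow_mul]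
      norm_num
    have hCS : ∀ n, ((‖∫ x, ((ρ n ^ ((d:ℝ)/2) : ℝ) : ℂ) * u n (ρ n • x + xc n) *
        (starRingEnd ℂ) (φ x)‖₊ : ℝ≥0∞)) ^ 2 ≤ I n * J := by
      intro n
      have hvm : AEStronglyMeasurable
          (fun x => ((ρ n ^ ((d:ℝ)/2) : ℝ) : ℂ) * u n (ρ n • x + xc n)) volume := by
        have := ((hu n).aestronglyMeasurable.comp_quasiMeasurePreserving
          (affine_qmp d (hρpos n) (xc n)))
        exact this.const_mul _
      have h1 : ((‖∫ x, ((ρ n ^ ((d:ℝ)/2) : ℝ) : ℂ) * u n (ρ n • x + xc n) *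
          (starRingEnd ℂ) (φ x)‖₊ : ℝ≥0∞))
          ≤ ∫⁻ x, ‖((ρ n ^ ((d:ℝ)/2) : ℝ) : ℂ) * u n (ρ n • x + xc n) *
            (starRingEnd ℂ) (φ x)‖₊ ∂volume :=
        enorm_integral_le_lintegral_enorm _
      have h2 : (fun x => ((‖((ρ n ^ ((d:ℝ)/2) : ℝ) : ℂ) * u n (ρ n • x + xc n) *
          (starRingEnd ℂ) (φ x)‖₊ : ℝ≥0∞)))
          = B.indicator (fun x => (‖((ρ n ^ ((d:ℝ)/2) : ℝ) : ℂ) * u n (ρ n • x + xc n)‖₊ : ℝ≥0∞)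
              * (‖V x‖₊ : ℝ≥0∞)) := by
        funext x
        by_cases hx : x ∈ B
        · simp [hφdef, Set.indicator_of_mem hx, nnnorm_mul]
        · simp [hφdef, Set.indicator_of_notMem hx, hx]
      rw [h2, lintegral_indicator hB] at h1
      have hf : AEMeasurable (fun x =>
          (‖((ρ n ^ ((d:ℝ)/2) : ℝ) : ℂ) * u n (ρ n • x + xc n)‖₊ : ℝ≥0∞)) (volume.restrict B) :=
        hvm.restrict.enorm
      have hg : AEMeasurable (fun x => (‖V x‖₊ : ℝ≥0∞)) (volume.restrict B) :=
        hV.aestronglyMeasurable.restrict.enorm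
      have hpq : Real.HolderConjugate 2 2 := Real.HolderConjugate.two_two
      have h3 := ENNReal.lintegral_mul_le_Lp_mul_Lq (volume.restrict B) hpq hf hg
      have hrp : ∀ a : ℝ≥0∞, a ^ (2:ℝ) = a ^ (2:ℕ) := fun a => by
        rw [← ENNReal.rpow_natCast a 2]; norm_num
      simp only [Pi.mul_apply, hrp] at h3
      calc ((‖∫ x, ((ρ n ^ ((d:ℝ)/2) : ℝ) : ℂ) * u n (ρ n • x + xc n) *
              (starRingEnd ℂ) (φ x)‖₊ : ℝ≥0∞)) ^ 2
          ≤ ((I n) ^ ((1:ℝ)/2) * J ^ ((1:ℝ)/2)) ^ (2:ℕ) := by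
            gcongr
            exact h1.trans h3
        _ = I n * J := by rw [mul_pow, hhalf, hhalf]
    -- J ≤ liminf I
    have key : J ≤ Filter.liminf I Filter.atTop := by
      rcases eq_or_ne J 0 with h0 | h0
      · rw [h0]; exact zero_le
      by_contra hcon
      push_neg at hcon
      obtain ⟨b, hb1, hb2⟩ := exists_between hcon
      have hfreq : ∃ᶠ n in atTop, I n < b := frequently_lt_of_liminf_lt (h := hb1)
      have hev : ∀ᶠ n in atTop, b * J < ((‖∫ x, ((ρ n ^ ((d:ℝ)/2) : ℝ) : ℂ) *
          u n (ρ n • x + xc n) * (starRingEnd ℂ) (φ x)‖₊ : ℝ≥0∞)) ^ 2 :=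
        hsq.eventually (eventually_gt_nhds (by
          calc b * J < J * J := (ENNReal.mul_lt_mul_iff_left h0 hJtop).mpr hb2
            _ = J ^ 2 := (sq J).symm))
      obtain ⟨n, hn1, hn2⟩ := (hfreq.and_eventually hev).exists
      have hbJ : b * J < I n * J := lt_of_lt_of_le hn2 (hCS n)
      exact absurd ((ENNReal.mul_lt_mul_iff_left h0 hJtop).mp hbJ) (not_lt.mpr hn1.le)
    -- I n ≤ S n eventually
    have hev2 : ∀ᶠ n in atTop, I n ≤ S n := by
      have hsmall : ∀ᶠ n in atTop, ρ n * A ≤ 1 := by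
        have h := hρ.eventually (gt_mem_nhds (show (0:ℝ) < A⁻¹ by positivity))
        filter_upwards [h] with n hn
        rw [← inv_mul_cancel₀ hA.ne']
        exact mul_le_mul_of_nonneg_right hn.le hA.le
      filter_upwards [hsmall] with n hn
      calc I n = ∫⁻ y in Metric.closedBall (xc n) (ρ n * A), (‖u n y‖₊ : ℝ≥0∞) ^ 2 ∂volume :=
          In_eq d (u n) (hu n) (hρpos n) (xc n) A
        _ ≤ ∫⁻ y in Metric.closedBall (xc n) 1, (‖u n y‖₊ : ℝ≥0∞) ^ 2 ∂volume :=
          lintegral_mono' (Measure.restrict_mono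
            (Metric.closedBall_subset_closedBall hn) le_rfl) le_rfl
        _ ≤ S n := le_iSup (fun y => ∫⁻ x in Metric.closedBall y 1,
            (‖u n x‖₊ : ℝ≥0∞) ^ 2 ∂volume) (xc n)
    exact key.trans (liminf_le_liminf hev2)
  refine ⟨main, ?_⟩
  set ν := volume.withDensity (fun x => (‖V x‖₊ : ℝ≥0∞) ^ 2) with hνdef
  have hU : ⋃ k : ℕ, Metric.closedBall (0 : EuclideanSpace ℝ (Fin d)) ((k:ℝ)+1) = Set.univ := by
    ext x
    simp only [Set.mem_iUnion, Set.mem_univ, iff_true, Metric.mem_closedBall, dist_zero_right]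
    obtain ⟨k, hk⟩ := exists_nat_ge ‖x‖
    exact ⟨k, hk.trans (by linarith)⟩
  have hdir : Directed (· ⊆ ·)
      (fun k : ℕ => Metric.closedBall (0 : EuclideanSpace ℝ (Fin d)) ((k:ℝ)+1)) := by
    intro i j
    refine ⟨max i j, Metric.closedBall_subset_closedBall ?_,
      Metric.closedBall_subset_closedBall ?_⟩ <;>
      · push_cast
        simp [le_max_left, le_max_right]
  have hswitch : (∫⁻ x, (‖V x‖₊ : ℝ≥0∞) ^ 2)
      = ⨆ k : ℕ, ∫⁻ x in Metric.closedBall (0 : EuclideanSpace ℝ (Fin d)) ((k:ℝ)+1),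
          (‖V x‖₊ : ℝ≥0∞) ^ 2 := by
    calc (∫⁻ x, (‖V x‖₊ : ℝ≥0∞) ^ 2) = ν Set.univ := by
          rw [hνdef, withDensity_apply _ MeasurableSet.univ, Measure.restrict_univ]
      _ = ν (⋃ k : ℕ, Metric.closedBall (0 : EuclideanSpace ℝ (Fin d)) ((k:ℝ)+1)) := by
          rw [hU]
      _ = ⨆ k : ℕ, ν (Metric.closedBall (0 : EuclideanSpace ℝ (Fin d)) ((k:ℝ)+1)) :=
          hdir.measure_iUnion
      _ = ⨆ k : ℕ, ∫⁻ x in Metric.closedBall (0 : EuclideanSpace ℝ (Fin d)) ((k:ℝ)+1),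
          (‖V x‖₊ : ℝ≥0∞) ^ 2 :=
          iSup_congr fun k => by rw [hνdef, withDensity_apply _ measurableSet_closedBall]
  rw [hswitch]
  exact iSup_le fun k => main ((k:ℝ)+1) (by positivity)
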